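/- Let k be a field, V a finite-dimensional k-vector space, and r ≥ 1 an integer. Suppose A ⊆ End_k(V) is a commutative r-spanning k-subspace of maximal dimension, i.e., every commutative r-spanning subspace B ⊆ End_k(V) satisfies dim_k B ≤ dim_k A. Then A contains id_V and is closed under composition; equivalently, A equals the unital subalgebra of End_k(V) that it generates. -/
import Mathlib


/-- A set `A` of endomorphisms of `V` is `r`-spanning if there exists a subspace `U ⊆ V`
with `dim U ≤ r` such that `V` is spanned by `{f u : f ∈ A, u ∈ U}`. -/
def IsRSpanning (k : Type*) {V : Type*} [Field k] [AddCommGroup V] [Module k V]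
    (A : Set (Module.End k V)) (r : ℕ) : Prop :=
  ∃ U : Submodule k V, Module.finrank k U ≤ r ∧
    Submodule.span k {w : V | ∃ f ∈ A, ∃ u ∈ U, w = f u} = ⊤

theorem maximal_commutative_rSpanning_isSubalgebra
    {k V : Type*} [Field k] [AddCommGroup V] [Module k V] [FiniteDimensional k V]
    (r : ℕ) (hr : 1 ≤ r)
    (A : Submodule k (Module.End k V))
    (hcomm : ∀ f ∈ A, ∀ g ∈ A, f * g = g * f)
    (hspan : IsRSpanning k (A : Set (Module.End k V)) r)
    (hmax : ∀ B : Submodule k (Module.End k V),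
      (∀ f ∈ B, ∀ g ∈ B, f * g = g * f) →
      IsRSpanning k (B : Set (Module.End k V)) r →
      Module.finrank k B ≤ Module.finrank k A) :
    (1 : Module.End k V) ∈ A ∧ ∀ f ∈ A, ∀ g ∈ A, f * g ∈ A := by
  set B : Submodule k (Module.End k V) :=
    Subalgebra.toSubmodule (Algebra.adjoin k (A : Set (Module.End k V))) with hB
  have hAB : A ≤ B := fun x hx => Algebra.subset_adjoin hx
  have hBcomm : ∀ f ∈ B, ∀ g ∈ B, f * g = g * f := by
    intro f hf g hg
    have : Commute f g := by
      refine Algebra.commute_of_mem_adjoin_of_forall_mem_commute hg ?_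
      intro b hb
      exact (Commute.symm ∘ Algebra.commute_of_mem_adjoin_of_forall_mem_commute hf)
        fun c hc => (hcomm b hb c hc)
    exact this
  have hBspan : IsRSpanning k (B : Set (Module.End k V)) r := by
    obtain ⟨U, hU, hUspan⟩ := hspan
    refine ⟨U, hU, ?_⟩
    rw [eq_top_iff, ← hUspan]
    refine Submodule.span_mono ?_
    rintro w ⟨f, hf, u, hu, rfl⟩
    exact ⟨f, hAB hf, u, hu, rfl⟩
  have heq : A = B :=
    Submodule.eq_of_le_of_finrank_le hAB (hmax B hBcomm hBspan)
  constructor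
  · rw [heq]
    exact Subalgebra.one_mem _
  · intro f hf g hg
    rw [heq] at hf hg ⊢
    exact Subalgebra.mul_mem _ hf hg
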